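/- For k-forms ω with ‖ω‖_{B^r} < ∞ and r ≥ 2, the Lie derivative satisfies ‖𝓛_v ω‖_{B^{r−1}} ≤ ‖v‖·‖ω‖_{B^r} for every v ∈ ℝⁿ. -/

import Mathlib

/-! Pointed chains: finitely supported functions from points of `E` to "k-vectors" in `V`,
difference chains, and the `B^r` norms of J. Harrison's theory of differential chains. -/

open Finsupp

variable {E V : Type*} [NormedAddCommGroup E] [NormedSpace ℝ E]
  [NormedAddCommGroup V] [NormedSpace ℝ V]

/-- The difference chain `Δ^j_U (p; α)`, for a list `U = [u₁,…,u_j]` of vectors. -/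
noncomputable def diffChain : List E → E → V → (E →₀ V)
  | [], p, α => Finsupp.single p α
  | u :: U, p, α => Finsupp.mapDomain (· + u) (diffChain U p α) - diffChain U p α

/-- The weight `|Δ^j_U(p;α)|_j := ‖u₁‖⋯‖u_j‖‖α‖` of a difference chain. -/
noncomputable def dweight (U : List E) (α : V) : ℝ := (U.map fun u => ‖u‖).prod * ‖α‖

/-- The `r`-norm `‖A‖_{B^r}` on pointed chains: the infimum of `Σᵢ |Δ^{jᵢ}_{Uᵢ}(pᵢ;αᵢ)|_{jᵢ}`
over all decompositions `A = Σᵢ Δ^{jᵢ}_{Uᵢ}(pᵢ;αᵢ)` with all `jᵢ ≤ r`. -/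
noncomputable def Bnorm (r : ℕ) (A : E →₀ V) : ℝ :=
  sInf {s : ℝ | ∃ L : List (List E × E × V),
    (∀ t ∈ L, t.1.length ≤ r) ∧
    A = (L.map fun t => diffChain t.1 t.2.1 t.2.2).sum ∧
    s = (L.map fun t => dweight t.1 t.2.2).sum}

/-- Evaluation (integration) of a `k`-form `ω` (as a function of a point and a `k`-vector)
on a pointed chain `A`: `ω(Σ(pᵢ;αᵢ)) = Σ ω(pᵢ;αᵢ)`. -/
noncomputable def pairF (ω : E → V → ℝ) (A : E →₀ V) : ℝ := A.sum fun p α => ω p α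

/-- `C` is a `B^r`-bound for the form `ω`: `|ω(Δ^j_U(p;α))| ≤ C·‖u₁‖⋯‖u_j‖‖α‖` for all
difference chains of order `j ≤ r`.  Thus `‖ω‖_{B^r} = max{|ω|_{B⁰},…,|ω|_{B^r}}` is the
least such `C ≥ 0`. -/
def IsBBound (r : ℕ) (ω : E → V → ℝ) (C : ℝ) : Prop :=
  ∀ (U : List E) (p : E) (α : V), U.length ≤ r →
    |pairF ω (diffChain U p α)| ≤ C * dweight U α


open Filter MeasureTheory Topology

/-- A Lipschitz function on `ℝ` whose second differences are `O(|s||u|)` is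
differentiable at `0`. -/
lemma exists_hasDerivAt_of_secondDiff (φ : ℝ → ℝ) (K₁ K₂ : ℝ) (hK₂ : 0 ≤ K₂)
    (h1 : ∀ x y : ℝ, |φ x - φ y| ≤ K₁ * |x - y|)
    (h2 : ∀ a s u : ℝ, |φ (a + s + u) - φ (a + s) - φ (a + u) + φ a| ≤ K₂ * (|s| * |u|)) :
    ∃ d, HasDerivAt φ d 0 := by
  have hK₁ : 0 ≤ K₁ := by
    have h := h1 1 0
    simp only [sub_zero, abs_one, mul_one] at h
    exact le_trans (abs_nonneg _) h
  have lip : LipschitzWith (Real.toNNReal K₁) φ :=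
    LipschitzWith.of_dist_le_mul fun x y => by
      rw [Real.dist_eq, Real.dist_eq, Real.coe_toNNReal _ hK₁]; exact h1 x y
  have hae : ∀ᵐ x ∂(volume : Measure ℝ), DifferentiableAt ℝ φ x := lip.ae_differentiableAt
  have hds : ∀ ε > (0:ℝ), ∃ b : ℝ, |b| < ε ∧ DifferentiableAt ℝ φ b := by
    intro ε hε
    by_contra hcon
    push_neg at hcon
    have hsub : Metric.ball (0:ℝ) ε ⊆ {x : ℝ | ¬ DifferentiableAt ℝ φ x} := by
      intro x hx
      exact hcon x (by simpa [Real.dist_eq] using hx)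
    have h0 : volume {x : ℝ | ¬ DifferentiableAt ℝ φ x} = 0 := by
      simpa [ae_iff] using hae
    exact absurd (measure_mono_null hsub h0) (Metric.measure_ball_pos volume 0 hε).ne'
  -- key estimate: comparing slopes at `0` and at `b`
  have key : ∀ b : ℝ, ∀ t : ℝ, t ≠ 0 → |slope φ 0 t - slope φ b (b + t)| ≤ K₂ * |b| := by
    intro b t ht
    rw [slope_def_field, slope_def_field]
    have e : (φ t - φ 0) / (t - 0) - (φ (b + t) - φ b) / (b + t - b)
        = (φ t - φ 0 - (φ (b + t) - φ b)) / t := by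
      rw [sub_zero, add_sub_cancel_left, div_sub_div_same]
    rw [e, abs_div]
    rw [div_le_iff₀ (abs_pos.2 ht)]
    have h := h2 0 b t
    simp only [zero_add] at h
    have e2 : φ t - φ 0 - (φ (b + t) - φ b) = -(φ (b + t) - φ b - φ t + φ 0) := by ring
    rw [e2, abs_neg]
    calc |φ (b + t) - φ b - φ t + φ 0| ≤ K₂ * (|b| * |t|) := h
      _ = K₂ * |b| * |t| := by ring
  have hC : Cauchy (Filter.map (slope φ 0) (𝓝[≠] (0:ℝ))) := by
    rw [Metric.cauchy_iff]
    refine ⟨Filter.map_neBot, fun ε hε => ?_⟩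
    obtain ⟨b, hb, hbd⟩ := hds (ε / (4 * (K₂ + 1))) (by positivity)
    have hs := hasDerivAt_iff_tendsto_slope.1 hbd.hasDerivAt
    rw [Metric.tendsto_nhdsWithin_nhds] at hs
    obtain ⟨δ, hδ, hδ'⟩ := hs (ε / 4) (by positivity)
    have hKb : K₂ * |b| ≤ ε / 4 := by
      have hc : (K₂ + 1) * (ε / (4 * (K₂ + 1))) = ε / 4 := by
        field_simp
      calc K₂ * |b| ≤ (K₂ + 1) * (ε / (4 * (K₂ + 1))) :=
            mul_le_mul (by linarith) hb.le (abs_nonneg _) (by linarith)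
        _ = ε / 4 := hc
    refine ⟨slope φ 0 '' {x : ℝ | x ≠ 0 ∧ dist x 0 < δ}, ?_, ?_⟩
    · apply Filter.image_mem_map
      have : {x : ℝ | x ≠ 0 ∧ dist x 0 < δ} = {(0:ℝ)}ᶜ ∩ Metric.ball 0 δ := by
        ext x; simp [Metric.mem_ball]
      rw [this]
      exact Filter.inter_mem self_mem_nhdsWithin
        (mem_nhdsWithin_of_mem_nhds (Metric.ball_mem_nhds 0 hδ))
    · rintro x ⟨x', ⟨hx'0, hx'δ⟩, rfl⟩ y ⟨y', ⟨hy'0, hy'δ⟩, rfl⟩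
      have hmem : ∀ t : ℝ, t ≠ 0 → dist t 0 < δ →
          dist (slope φ b (b + t)) (deriv φ b) < ε / 4 := by
        intro t ht htδ
        refine hδ' ?_ ?_
        · simp [Set.mem_compl_singleton_iff, ht]
        · rw [Real.dist_eq, add_sub_cancel_left]
          simpa [Real.dist_eq] using htδ
      have e1 := key b x' hx'0
      have e2 := key b y' hy'0
      have e3 := hmem x' hx'0 hx'δ
      have e4 := hmem y' hy'0 hy'δ
      rw [Real.dist_eq] at e3 e4 ⊢
      have tri : |slope φ 0 x' - slope φ 0 y'| ≤
          |slope φ 0 x' - slope φ b (b + x')| + |slope φ b (b + x') - deriv φ b|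
            + |deriv φ b - slope φ b (b + y')| + |slope φ b (b + y') - slope φ 0 y'| := by
        have t1 := abs_sub_le (slope φ 0 x') (slope φ b (b + x')) (slope φ 0 y')
        have t2 := abs_sub_le (slope φ b (b + x')) (deriv φ b) (slope φ 0 y')
        have t3 := abs_sub_le (deriv φ b) (slope φ b (b + y')) (slope φ 0 y')
        linarith
      have e2' : |slope φ b (b + y') - slope φ 0 y'| ≤ K₂ * |b| := by
        rw [abs_sub_comm]; exact e2
      have e4' : |deriv φ b - slope φ b (b + y')| < ε / 4 := by
        rw [abs_sub_comm]; exact e4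
      linarith
  obtain ⟨L, hL⟩ := CompleteSpace.complete hC
  exact ⟨L, hasDerivAt_iff_tendsto_slope.2 hL⟩

section ChainLemmas

variable {E V : Type*} [NormedAddCommGroup E] [NormedSpace ℝ E]
  [NormedAddCommGroup V] [NormedSpace ℝ V]

lemma pairF_sub (ω : E → V →ₗ[ℝ] ℝ) (A B : E →₀ V) :
    pairF (fun p α => ω p α) (A - B)
      = pairF (fun p α => ω p α) A - pairF (fun p α => ω p α) B :=
  Finsupp.sum_sub_index fun a b₁ b₂ => map_sub (ω a) b₁ b₂

lemma pairF_single (ω : E → V →ₗ[ℝ] ℝ) (p : E) (α : V) :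
    pairF (fun p α => ω p α) (Finsupp.single p α) = ω p α :=
  Finsupp.sum_single_index (map_zero (ω p))

lemma pairF_mapDomain (ω : E → V →ₗ[ℝ] ℝ) (u : E) (A : E →₀ V) :
    pairF (fun p α => ω p α) (Finsupp.mapDomain (· + u) A)
      = A.sum fun q β => ω (q + u) β :=
  Finsupp.sum_mapDomain_index (fun b => map_zero (ω b)) (fun b m₁ m₂ => map_add (ω b) m₁ m₂)

lemma mapDomain_sub' (u : E) (A B : E →₀ V) :
    Finsupp.mapDomain (· + u) (A - B)
      = Finsupp.mapDomain (· + u) A - Finsupp.mapDomain (· + u) B :=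
  map_sub (Finsupp.mapDomain.addMonoidHom (· + u)) A B

lemma diffChain_shift (U : List E) (u p : E) (α : V) :
    diffChain U (p + u) α = Finsupp.mapDomain (· + u) (diffChain U p α) := by
  induction U generalizing p with
  | nil => simp [diffChain, Finsupp.mapDomain_single]
  | cons w U ih =>
    simp only [diffChain, ih, mapDomain_sub']
    congr 1
    rw [← Finsupp.mapDomain_comp, ← Finsupp.mapDomain_comp]
    congr 1
    funext x
    simp [Function.comp, add_right_comm]

lemma pairF_diffChain_cons (ω : E → V →ₗ[ℝ] ℝ) (u : E) (U : List E) (p : E) (α : V) :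
    pairF (fun p α => ω p α) (diffChain (u :: U) p α)
      = pairF (fun p α => ω p α) (diffChain U (p + u) α)
        - pairF (fun p α => ω p α) (diffChain U p α) := by
  rw [diffChain, pairF_sub, diffChain_shift]

lemma pairF_diffChain_one (ω : E → V →ₗ[ℝ] ℝ) (u : E) (p : E) (α : V) :
    pairF (fun p α => ω p α) (diffChain [u] p α) = ω (p + u) α - ω p α := by
  rw [pairF_diffChain_cons]
  simp only [diffChain, pairF_single]

lemma pairF_diffChain_two (ω : E → V →ₗ[ℝ] ℝ) (s u : E) (p : E) (α : V) :
    pairF (fun p α => ω p α) (diffChain [s, u] p α)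
      = ω (p + s + u) α - ω (p + s) α - (ω (p + u) α - ω p α) := by
  rw [pairF_diffChain_cons, pairF_diffChain_one, pairF_diffChain_one]

lemma dweight_cons (u : E) (U : List E) (α : V) :
    dweight (u :: U) α = ‖u‖ * dweight U α := by
  simp [dweight, mul_assoc]

lemma dweight_nonneg (U : List E) (α : V) : 0 ≤ dweight U α := by
  apply mul_nonneg _ (norm_nonneg α)
  apply List.prod_nonneg
  intro a ha
  simp only [List.mem_map] at ha
  obtain ⟨u, -, rfl⟩ := ha
  exact norm_nonneg u

lemma abs_hasDerivAt_le {f : ℝ → ℝ} {D M : ℝ} (hf : HasDerivAt f D 0)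
    (h : ∀ t : ℝ, |f t - f 0| ≤ M * |t|) : |D| ≤ M := by
  have h1 : Filter.Tendsto (slope f 0) (nhdsWithin 0 {(0:ℝ)}ᶜ) (nhds D) :=
    hasDerivAt_iff_tendsto_slope.1 hf
  have h2 : Filter.Tendsto (fun t => |slope f 0 t|) (nhdsWithin 0 {(0:ℝ)}ᶜ) (nhds |D|) :=
    h1.abs
  refine le_of_tendsto h2 ?_
  filter_upwards [self_mem_nhdsWithin] with t ht
  have ht0 : t ≠ 0 := ht
  rw [slope_def_field, sub_zero, abs_div]
  rw [div_le_iff₀ (abs_pos.2 ht0)]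
  exact h t

end ChainLemmas

/-- For a `k`-form `ω` with finite `B^r` norm, `r ≥ 2` (here: admitting a
`B^r`-bound `C`), the Lie derivative `𝓛_v ω` (the directional derivative of `ω` in the
constant direction `v`) satisfies `‖𝓛_v ω‖_{B^{r−1}} ≤ ‖v‖·‖ω‖_{B^r}`: `‖v‖·C` is a
`B^{r−1}`-bound for `𝓛_v ω`. -/
theorem lie_derivative_form_bound (r : ℕ) (hr : 2 ≤ r) (ω : E → V →ₗ[ℝ] ℝ) (C : ℝ)
    (hC : 0 ≤ C) (hω : IsBBound r (fun p α => ω p α) C) (v : E) :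
    IsBBound (r - 1) (fun p α => deriv (fun t : ℝ => ω (p + t • v) α) 0) (‖v‖ * C) := by
  intro U p α hU
  -- per-point differentiability
  have hdiff : ∀ (q : E) (β : V), ∃ d, HasDerivAt (fun t : ℝ => ω (q + t • v) β) d 0 := by
    intro q β
    apply exists_hasDerivAt_of_secondDiff _ (C * (‖v‖ * ‖β‖)) (C * (‖v‖ * ‖v‖ * ‖β‖))
      (by positivity)
    · intro x y
      have h := hω [(x - y) • v] (q + y • v) β (by simp; omega)
      rw [pairF_diffChain_one] at h
      have hpt : q + y • v + (x - y) • v = q + x • v := by module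
      rw [hpt] at h
      calc |ω (q + x • v) β - ω (q + y • v) β| ≤ C * dweight [(x - y) • v] β := h
        _ = C * (‖v‖ * ‖β‖) * |x - y| := by
            simp [dweight, norm_smul, Real.norm_eq_abs]; ring
    · intro a s u
      have h := hω [s • v, u • v] (q + a • v) β (by simp; omega)
      rw [pairF_diffChain_two] at h
      have p1 : q + a • v + s • v = q + (a + s) • v := by module
      have p2 : q + a • v + s • v + u • v = q + (a + s + u) • v := by module
      have p3 : q + a • v + u • v = q + (a + u) • v := by module
      rw [p2] at h
      rw [p1] at h
      rw [p3] at h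
      have e : ω (q + (a + s + u) • v) β - ω (q + (a + s) • v) β - ω (q + (a + u) • v) β
          + ω (q + a • v) β
          = ω (q + (a + s + u) • v) β - ω (q + (a + s) • v) β
            - (ω (q + (a + u) • v) β - ω (q + a • v) β) := by ring
      rw [e]
      calc _ ≤ C * dweight [s • v, u • v] β := h
        _ = C * (‖v‖ * ‖v‖ * ‖β‖) * (|s| * |u|) := by
            simp [dweight, norm_smul, Real.norm_eq_abs]; ring
  choose d hd using hdiff
  set X := diffChain U p α with hX
  -- the function t ↦ ω(Δ_U(p + tv; α))
  set f : ℝ → ℝ := fun t => X.sum fun q β => ω (q + t • v) β with hf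
  have hfd : HasDerivAt f (∑ q ∈ X.support, d q (X q)) 0 := by
    apply HasDerivAt.fun_sum
    intro q _
    exact hd q (X q)
  have htarget : pairF (fun p α => deriv (fun t : ℝ => ω (p + t • v) α) 0) X
      = ∑ q ∈ X.support, d q (X q) := by
    rw [pairF, Finsupp.sum]
    exact Finset.sum_congr rfl fun q _ => (hd q (X q)).deriv
  have hbound : ∀ t : ℝ, |f t - f 0| ≤ (‖v‖ * C * dweight U α) * |t| := by
    intro t
    have h0 : f 0 = pairF (fun p α => ω p α) X := by
      simp only [hf, pairF]
      congr 1
      funext q β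
      simp
    have ht : f t = pairF (fun p α => ω p α) (Finsupp.mapDomain (· + t • v) X) := by
      rw [pairF_mapDomain]
    have hsub : f t - f 0 = pairF (fun p α => ω p α) (diffChain (t • v :: U) p α) := by
      rw [h0, ht, ← pairF_sub]
      congr 1
    have h := hω (t • v :: U) p α (by simp; omega)
    rw [← hsub] at h
    calc |f t - f 0| ≤ C * dweight (t • v :: U) α := h
      _ = (‖v‖ * C * dweight U α) * |t| := by
          rw [dweight_cons, norm_smul, Real.norm_eq_abs]; ring
  rw [htarget]
  calc |∑ q ∈ X.support, d q (X q)| ≤ ‖v‖ * C * dweight U α :=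
        abs_hasDerivAt_le hfd hbound
    _ = ‖v‖ * C * dweight U α := rfl
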